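/- If a parallel computation has work T₁ and span T∞, then a greedy scheduler on p processors completes it in time T_p ≤ T₁/p + T∞ (Brent's theorem / the greedy scheduling bound), and T_p ≥ max(T₁/p, T∞). -/

import Mathlib

open Finset

private lemma chain_time_le' {ι : Type} (edge : ι → ι → Prop) (time : ι → ℕ)
    (hvalid : ∀ i j, edge i j → time i < time j) :
    ∀ (l : List ι) (a : ι), (a :: l).Chain' edge →
      time a + l.length ≤ time ((a :: l).getLast (by simp)) := by
  intro l
  induction l with
  | nil => intro a _; simp
  | cons b l ih =>
    intro a hch
    have h1 : edge a b := (List.isChain_cons_cons.mp hch).1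
    have h2 : (b :: l).Chain' edge := (List.isChain_cons_cons.mp hch).2
    have := ih b h2
    have hlast : ((a :: b :: l).getLast (by simp)) = ((b :: l).getLast (by simp)) := by
      simp [List.getLast]
    rw [hlast]
    have := hvalid a b h1
    simp only [List.length_cons]
    omega

/-- Brent's theorem / the greedy-scheduling bound.  A computation is a finite
DAG of unit-time instructions (`edge i j` = `i` must finish before `j` starts);
its work `T₁` is the number of instructions and its span is the length of the
longest chain.  A greedy schedule on `p` processors assigns each instruction a
time step respecting precedences, runs at each step `min p (#ready)`
instructions, and finishes at time `Tp`.  Then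
`max (T₁/p) span ≤ Tp ≤ T₁/p + span`. -/
theorem greedy_scheduling_bound (ι : Type) [Fintype ι] [Nonempty ι]
    (edge : ι → ι → Prop) (p span Tp : ℕ) (hp : 1 ≤ p)
    (hspan_ub : ∀ l : List ι, l.Chain' edge → l.length ≤ span)
    (hspan_ex : ∃ l : List ι, l.Chain' edge ∧ l.length = span)
    (time : ι → ℕ)
    (htime1 : ∀ i, 1 ≤ time i)
    (hvalid : ∀ i j, edge i j → time i < time j)
    (hTp : ∀ i, time i ≤ Tp) (hTpex : ∃ i, time i = Tp)
    (hgreedy : ∀ t : ℕ, 1 ≤ t → t ≤ Tp →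
      Nat.card {i : ι // time i = t} =
        min p (Nat.card {i : ι // t ≤ time i ∧ ∀ j, edge j i → time j < t})) :
    (Tp : ℝ) ≤ (Fintype.card ι : ℝ) / p + span ∧
    (Fintype.card ι : ℝ) / p ≤ Tp ∧ (span : ℝ) ≤ Tp := by
  classical
  obtain ⟨istar, histar⟩ := hTpex
  set T1 := Fintype.card ι with hT1
  -- the set of instructions executed at step t
  set A : ℕ → Finset ι := fun t => univ.filter (fun i => time i = t) with hA
  -- the set of instructions ready at step t
  set R : ℕ → Finset ι := fun t =>
    univ.filter (fun i => t ≤ time i ∧ ∀ j, edge j i → time j < t) with hR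
  have hcardA : ∀ t, Nat.card {i : ι // time i = t} = (A t).card := by
    intro t; rw [Nat.card_eq_fintype_card, Fintype.card_subtype]
  have hcardR : ∀ t,
      Nat.card {i : ι // t ≤ time i ∧ ∀ j, edge j i → time j < t} = (R t).card := by
    intro t; rw [Nat.card_eq_fintype_card, Fintype.card_subtype]
  have hgr : ∀ t, 1 ≤ t → t ≤ Tp → (A t).card = min p ((R t).card) := by
    intro t h1 h2
    rw [← hcardA, ← hcardR]; exact hgreedy t h1 h2
  have hAsubR : ∀ t, A t ⊆ R t := by
    intro t i hi
    simp only [hA, mem_filter, mem_univ, true_and] at hi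
    simp only [hR, mem_filter, mem_univ, true_and]
    exact ⟨le_of_eq hi.symm, fun j hj => hi ▸ hvalid j i hj⟩
  -- total work is the sum of executed instructions over the steps
  have hsum : T1 = ∑ t ∈ Finset.Icc 1 Tp, (A t).card := by
    rw [hT1, ← Finset.card_univ]
    exact Finset.card_eq_sum_card_fiberwise (fun i _ => by
      simp [Finset.mem_Icc, htime1 i, hTp i])
  -- upper bound on work per step
  have hwork : T1 ≤ p * Tp := by
    rw [hsum]
    calc ∑ t ∈ Finset.Icc 1 Tp, (A t).card
        ≤ ∑ t ∈ Finset.Icc 1 Tp, p := by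
          refine Finset.sum_le_sum fun t ht => ?_
          simp only [Finset.mem_Icc] at ht
          rw [hgr t ht.1 ht.2]; exact min_le_left _ _
      _ = p * Tp := by simp [Nat.card_Icc, mul_comm]
  -- incomplete steps
  set I : Finset ℕ := (Finset.Icc 1 Tp).filter (fun t => (A t).card ≠ p) with hI
  have hAR : ∀ t ∈ I, A t = R t := by
    intro t ht
    simp only [hI, Finset.mem_filter, Finset.mem_Icc] at ht
    have h := hgr t ht.1.1 ht.1.2
    have hmin : min p ((R t).card) = (R t).card := by omega
    rw [hmin] at h
    exact Finset.eq_of_subset_of_card_le (hAsubR t) h.ge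
  -- key lemma: the number of incomplete steps up to `time i` is bounded by
  -- the length of a chain ending at `i`
  have key : ∀ n, ∀ i : ι, time i ≤ n →
      ∃ l : List ι, l.Chain' edge ∧ l.getLast? = some i ∧
        (I.filter (· ≤ time i)).card ≤ l.length := by
    intro n
    induction n with
    | zero => intro i hi; exact absurd (htime1 i) (by omega)
    | succ n ih =>
      intro i hi
      have hnotmem : ∀ s ∈ I, s < time i → ∃ j, edge j i ∧ s ≤ time j := by
        intro s hs hst
        have hsI := hs
        simp only [hI, Finset.mem_filter, Finset.mem_Icc] at hsI
        have hAiR : i ∉ R s := by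
          rw [← hAR s hs]
          simp only [hA, mem_filter, mem_univ, true_and]
          omega
        simp only [hR, mem_filter, mem_univ, true_and, not_and, not_forall, not_lt] at hAiR
        obtain ⟨j, hj1, hj2⟩ := hAiR (le_of_lt hst)
        exact ⟨j, hj1, hj2⟩
      by_cases hpred : ∃ j, edge j i
      · -- pick a predecessor with maximal time
        set P : Finset ι := univ.filter (fun j => edge j i) with hP
        have hPne : P.Nonempty := by
          obtain ⟨j, hj⟩ := hpred
          exact ⟨j, by simp [hP, hj]⟩
        obtain ⟨j, hjP, hjmax⟩ := Finset.exists_max_image P time hPne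
        simp only [hP, mem_filter, mem_univ, true_and] at hjP
        have hjlt : time j < time i := hvalid j i hjP
        obtain ⟨l, hch, hlast, hcard⟩ := ih j (by omega)
        refine ⟨l ++ [i], ?_, ?_, ?_⟩
        · rw [show List.Chain' edge (l ++ [i]) ↔ _ from List.isChain_append]
          refine ⟨hch, List.isChain_singleton i, ?_⟩
          intro x hx y hy
          rw [hlast] at hx
          simp at hx hy
          rw [← hx, ← hy]; exact hjP
        · simp [List.getLast?_append]
        · have hsub : I.filter (· ≤ time i) ⊆
              insert (time i) (I.filter (· ≤ time j)) := by
            intro s hs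
            simp only [Finset.mem_filter] at hs
            rcases eq_or_lt_of_le hs.2 with h | h
            · simp [h]
            · obtain ⟨j', hj'1, hj'2⟩ := hnotmem s hs.1 h
              have : time j' ≤ time j := hjmax j' (by simp [hP, hj'1])
              simp only [Finset.mem_insert, Finset.mem_filter]
              right; exact ⟨hs.1, by omega⟩
          calc (I.filter (· ≤ time i)).card
              ≤ (insert (time i) (I.filter (· ≤ time j))).card :=
                Finset.card_le_card hsub
            _ ≤ (I.filter (· ≤ time j)).card + 1 := Finset.card_insert_le _ _
            _ ≤ l.length + 1 := by omega
            _ = (l ++ [i]).length := by simp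
      · -- no predecessors: `i` is ready at every step, so every incomplete
        -- step before `time i` would have executed it
        push_neg at hpred
        refine ⟨[i], List.isChain_singleton i, rfl, ?_⟩
        have hsub : I.filter (· ≤ time i) ⊆ {time i} := by
          intro s hs
          simp only [Finset.mem_filter] at hs
          rcases eq_or_lt_of_le hs.2 with h | h
          · simp [h]
          · obtain ⟨j, hj, _⟩ := hnotmem s hs.1 h
            exact absurd hj (hpred j)
        have := Finset.card_le_card hsub
        simpa using this
  -- the number of incomplete steps is at most the span
  have hIspan : I.card ≤ span := by
    obtain ⟨l, hch, _, hcard⟩ := key (time istar) istar le_rfl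
    have hIfull : I.filter (· ≤ time istar) = I := by
      apply Finset.filter_true_of_mem
      intro s hs
      simp only [hI, Finset.mem_filter, Finset.mem_Icc] at hs
      omega
    rw [hIfull] at hcard
    exact le_trans hcard (hspan_ub l hch)
  -- complete steps do work p each
  have hcomplete : ((Finset.Icc 1 Tp).filter (fun t => ¬ (A t).card ≠ p)).card * p ≤ T1 := by
    rw [hsum]
    calc ((Finset.Icc 1 Tp).filter (fun t => ¬ (A t).card ≠ p)).card * p
        = ∑ t ∈ (Finset.Icc 1 Tp).filter (fun t => ¬ (A t).card ≠ p), p := by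
          rw [Finset.sum_const, smul_eq_mul]
      _ = ∑ t ∈ (Finset.Icc 1 Tp).filter (fun t => ¬ (A t).card ≠ p), (A t).card := by
          refine Finset.sum_congr rfl fun t ht => ?_
          simp only [Finset.mem_filter, not_not] at ht
          exact ht.2.symm
      _ ≤ ∑ t ∈ Finset.Icc 1 Tp, (A t).card :=
          Finset.sum_le_sum_of_subset (Finset.filter_subset _ _)
  have hsplit : Tp = ((Finset.Icc 1 Tp).filter (fun t => ¬ (A t).card ≠ p)).card + I.card := by
    rw [hI, add_comm, Finset.card_filter_add_card_filter_not, Nat.card_Icc]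
    omega
  -- the main counting inequality
  have hmain : p * Tp ≤ T1 + p * span := by
    rw [hsplit, Nat.mul_add]
    exact Nat.add_le_add (by rw [Nat.mul_comm]; exact hcomplete)
      (Nat.mul_le_mul_left p hIspan)
  -- span ≤ Tp
  have hspanTp : span ≤ Tp := by
    obtain ⟨l, hch, hlen⟩ := hspan_ex
    rcases l with _ | ⟨a, l⟩
    · simp at hlen; omega
    · have := chain_time_le' edge time hvalid l a hch
      have h1 := htime1 a
      have h2 := hTp ((a :: l).getLast (by simp))
      simp only [List.length_cons] at hlen
      omega
  -- now transfer to the reals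
  have hp0 : (0 : ℝ) < (p : ℝ) := by exact_mod_cast hp
  refine ⟨?_, ?_, by exact_mod_cast hspanTp⟩
  · have h : (p : ℝ) * Tp ≤ T1 + p * span := by exact_mod_cast hmain
    rw [div_add' _ _ _ hp0.ne', le_div_iff₀ hp0]
    nlinarith
  · rw [div_le_iff₀ hp0]
    have h : (T1 : ℝ) ≤ p * Tp := by exact_mod_cast hwork
    nlinarith
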